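/- Let n ≥ 3 be an integer, k an integer with 0 ≤ k ≤ n, and F a family of k-element subsets of [n]. Then F ≠ ∅ if and only if there exists a set T with T ∈ bases(I^∩_{L,1}), T ∈ bases(I*), and |T ∩ R| = k. -/

import Mathlib

/-- The set `X(S) = {(s,1) : s ∈ S} ∪ {(s̄,2) : s̄ ∈ [n] \ S}` inside the grid
`[n] × [n]` (columns `1` and `2` are represented by the `Fin n` values `0` and `1`). -/
def XS (n : ℕ) (S : Finset (Fin n)) : Finset (Fin n × Fin n) :=
  Finset.univ.filter fun e => ((e.2 : ℕ) = 0 ∧ e.1 ∈ S) ∨ ((e.2 : ℕ) = 1 ∧ e.1 ∉ S)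

/-- `T ⊆ [n] × [n]` is `L`-perfect for the matrix `L` given by `L_{i,1} = 1` for all
`i`, `L_{1,2} = k`, `L_{2,2} = n - k`, and `L_{i,2} = 0` otherwise. -/
def LPerfect (n k : ℕ) (T : Finset (Fin n × Fin n)) : Prop :=
  (∀ i : Fin n, (T.filter fun e => e.1 = i).card = 1) ∧
  (T.filter fun e => (e.2 : ℕ) = 0).card = k ∧
  (T.filter fun e => (e.2 : ℕ) = 1).card = n - k ∧
  (∀ i : Fin n, 2 ≤ (i : ℕ) → (T.filter fun e => e.2 = i).card = 0)

/-- The red elements `R = {(i,1) : i ∈ [n]}`. -/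
def Red (n : ℕ) : Finset (Fin n × Fin n) :=
  Finset.univ.filter fun e => (e.2 : ℕ) = 0

/-- The ground set `E = R ∪ Bl`, the first two columns of the grid. -/
def Egr (n : ℕ) : Finset (Fin n × Fin n) :=
  Finset.univ.filter fun e => (e.2 : ℕ) = 0 ∨ (e.2 : ℕ) = 1

/-- `G = {X(S) : S ∈ F}`. -/
def GFam (n : ℕ) (F : Set (Finset (Fin n))) : Set (Finset (Fin n × Fin n)) :=
  XS n '' F

/-- `X = {T ⊆ grid : |T| = n and (T is not L-perfect, or T ∈ G)}`. -/
def XFam (n k : ℕ) (F : Set (Finset (Fin n))) : Set (Finset (Fin n × Fin n)) :=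
  {T | T.card = n ∧ (¬ LPerfect n k T ∨ T ∈ GFam n F)}

/-- `I(X) = {T : T ⊆ T' for some T' ∈ X}`. -/
def IofX (n k : ℕ) (F : Set (Finset (Fin n))) : Set (Finset (Fin n × Fin n)) :=
  {T | ∃ B ∈ XFam n k F, T ⊆ B}

/-- `I* = {T ⊆ E : T ∈ I(X)}`, the restriction of the `G`-matroid to `E`. -/
def Istar (n k : ℕ) (F : Set (Finset (Fin n))) : Set (Finset (Fin n × Fin n)) :=
  {T | T ⊆ Egr n ∧ T ∈ IofX n k F}

/-- `I_{L,1} = {T ⊆ grid : at most one element of each row}`. -/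
def IL1 (n : ℕ) : Set (Finset (Fin n × Fin n)) :=
  {T | ∀ i : Fin n, (T.filter fun e => e.1 = i).card ≤ 1}

/-- `I^∩_{L,1} = {T ⊆ E : T ∈ I_{L,1}}`. -/
def IL1cap (n : ℕ) : Set (Finset (Fin n × Fin n)) :=
  {T | T ⊆ Egr n ∧ T ∈ IL1 n}

/-- `S ∈ bases(I)`: `S` is a member of `I` of maximum cardinality. -/
def IsBasisOf {β : Type*} (I : Set (Finset β)) (S : Finset β) : Prop :=
  S ∈ I ∧ ∀ T ∈ I, T.card ≤ S.card

section Aux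

variable {n k : ℕ}

lemma aux_card_fiber (T : Finset (Fin n × Fin n)) :
    T.card = ∑ i : Fin n, (T.filter fun e => e.1 = i).card :=
  Finset.card_eq_sum_card_fiberwise (f := Prod.fst) (fun x _ => Finset.mem_univ _)

lemma aux_IL1_card_le (T : Finset (Fin n × Fin n)) (hT : T ∈ IL1 n) : T.card ≤ n := by
  rw [aux_card_fiber T]
  calc ∑ i : Fin n, (T.filter fun e => e.1 = i).card ≤ ∑ _i : Fin n, 1 :=
        Finset.sum_le_sum fun i _ => hT i
    _ = n := by simp

lemma aux_XS_subset (S : Finset (Fin n)) : XS n S ⊆ Egr n := by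
  intro e he
  simp only [XS, Finset.mem_filter, Finset.mem_univ, true_and] at he
  simp only [Egr, Finset.mem_filter, Finset.mem_univ, true_and]
  tauto

lemma aux_XS_row (hn : 3 ≤ n) (S : Finset (Fin n)) (i : Fin n) :
    ((XS n S).filter fun e => e.1 = i) =
      if i ∈ S then {(i, (⟨0, by omega⟩ : Fin n))} else {(i, (⟨1, by omega⟩ : Fin n))} := by
  ext ⟨a, b⟩
  by_cases hi : i ∈ S <;>
    simp only [XS, Finset.filter_filter, Finset.mem_filter, Finset.mem_univ, true_and, hi,
      if_pos, if_neg, not_false_iff, Finset.mem_singleton, Prod.mk.injEq] <;>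
    constructor
  · rintro ⟨h, rfl⟩
    rcases h with ⟨h0, -⟩ | ⟨-, h2⟩
    · exact ⟨rfl, Fin.ext h0⟩
    · exact absurd hi h2
  · rintro ⟨rfl, rfl⟩
    exact ⟨Or.inl ⟨rfl, hi⟩, rfl⟩
  · rintro ⟨h, rfl⟩
    rcases h with ⟨-, h2⟩ | ⟨h1, -⟩
    · exact absurd h2 hi
    · exact ⟨rfl, Fin.ext h1⟩
  · rintro ⟨rfl, rfl⟩
    exact ⟨Or.inr ⟨rfl, hi⟩, rfl⟩

lemma aux_XS_row_card (hn : 3 ≤ n) (S : Finset (Fin n)) (i : Fin n) :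
    ((XS n S).filter fun e => e.1 = i).card = 1 := by
  rw [aux_XS_row hn S i]
  split <;> simp

lemma aux_XS_card (hn : 3 ≤ n) (S : Finset (Fin n)) : (XS n S).card = n := by
  rw [aux_card_fiber (XS n S)]
  simp [aux_XS_row_card hn S]

lemma aux_XS_mem_IL1cap (hn : 3 ≤ n) (S : Finset (Fin n)) : XS n S ∈ IL1cap n :=
  ⟨aux_XS_subset S, fun i => (aux_XS_row_card hn S i).le⟩

lemma aux_inter_red (T : Finset (Fin n × Fin n)) :
    T ∩ Red n = T.filter fun e => (e.2 : ℕ) = 0 := by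
  ext e
  simp [Red, Finset.mem_inter, Finset.mem_filter]

lemma aux_XS_red_card (hn : 3 ≤ n) (S : Finset (Fin n)) :
    ((XS n S).filter fun e => (e.2 : ℕ) = 0).card = S.card := by
  have : ((XS n S).filter fun e => (e.2 : ℕ) = 0) =
      S.map ⟨fun s => (s, (⟨0, by omega⟩ : Fin n)), fun a b h => congrArg Prod.fst h⟩ := by
    ext ⟨a, b⟩
    simp only [XS, Finset.filter_filter, Finset.mem_filter, Finset.mem_univ, true_and,
      Finset.mem_map, Function.Embedding.coeFn_mk, Prod.mk.injEq]
    constructor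
    · rintro ⟨h, hb⟩
      rcases h with ⟨-, ha⟩ | ⟨h1, -⟩
      · exact ⟨a, ha, Prod.ext rfl (Fin.ext hb).symm⟩
      · omega
    · rintro ⟨s, hs, rfl, rfl⟩
      exact ⟨Or.inl ⟨rfl, hs⟩, rfl⟩
  rw [this, Finset.card_map]

lemma aux_Istar_card_le (T : Finset (Fin n × Fin n)) (hT : T ∈ Istar n k F) :
    T.card ≤ n := by
  obtain ⟨-, B, hB, hTB⟩ := hT
  calc T.card ≤ B.card := Finset.card_le_card hTB
    _ = n := hB.1

end Aux

/-- Lemma 5.2: `F ≠ ∅` iff there is a common basis `T` of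
`I^∩_{L,1}` and `I*` with exactly `k` red elements. -/
theorem stmt12 (n k : ℕ) (hn : 3 ≤ n) (hk : k ≤ n)
    (F : Set (Finset (Fin n))) (hF : ∀ S ∈ F, S.card = k) :
    F.Nonempty ↔
      ∃ T : Finset (Fin n × Fin n),
        IsBasisOf (IL1cap n) T ∧ IsBasisOf (Istar n k F) T ∧
        (T ∩ Red n).card = k := by
  constructor
  · rintro ⟨S, hS⟩
    refine ⟨XS n S, ⟨aux_XS_mem_IL1cap hn S, ?_⟩, ⟨?_, ?_⟩, ?_⟩
    · intro T hT
      exact (aux_IL1_card_le T hT.2).trans (aux_XS_card hn S).ge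
    · exact ⟨aux_XS_subset S, XS n S, ⟨aux_XS_card hn S, Or.inr ⟨S, hS, rfl⟩⟩,
        Finset.Subset.refl _⟩
    · intro T hT
      exact (aux_Istar_card_le T hT).trans (aux_XS_card hn S).ge
    · rw [aux_inter_red, aux_XS_red_card hn S, hF S hS]
  · rintro ⟨T, ⟨⟨hTE, hT1⟩, hTmax⟩, ⟨hTstar, hSmax⟩, hTred⟩
    -- `T` has cardinality `n`
    have hcard : T.card = n := by
      have h1 : T.card ≤ n := aux_IL1_card_le T hT1
      have h2 : n ≤ T.card := by
        have := hTmax (XS n ∅) (aux_XS_mem_IL1cap hn ∅)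
        rwa [aux_XS_card hn ∅] at this
      omega
    -- each row of `T` has exactly one element
    have hrows : ∀ i : Fin n, (T.filter fun e => e.1 = i).card = 1 := by
      have hsum : ∑ i : Fin n, (T.filter fun e => e.1 = i).card = ∑ _i : Fin n, 1 := by
        rw [← aux_card_fiber T, hcard]; simp
      have := (Finset.sum_eq_sum_iff_of_le (fun i _ => hT1 i)).mp hsum
      exact fun i => this i (Finset.mem_univ i)
    -- red and blue counts
    have hred : (T.filter fun e => (e.2 : ℕ) = 0).card = k := by
      rw [← aux_inter_red]; exact hTred
    have hblue : (T.filter fun e => (e.2 : ℕ) = 1).card = n - k := by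
      have hsplit := Finset.card_filter_add_card_filter_not
        (s := T) (p := fun e => (e.2 : ℕ) = 0)
      have hEq : (T.filter fun e => ¬ (e.2 : ℕ) = 0) = T.filter fun e => (e.2 : ℕ) = 1 := by
        ext e
        simp only [Finset.mem_filter, and_congr_right_iff]
        intro heT
        have := hTE heT
        simp only [Egr, Finset.mem_filter, Finset.mem_univ, true_and] at this
        omega
      rw [hEq] at hsplit
      omega
    have hcols : ∀ i : Fin n, 2 ≤ (i : ℕ) → (T.filter fun e => e.2 = i).card = 0 := by
      intro i hi
      rw [Finset.card_eq_zero, Finset.filter_eq_empty_iff]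
      intro e heT heq
      have := hTE heT
      simp only [Egr, Finset.mem_filter, Finset.mem_univ, true_and] at this
      rw [heq] at this
      omega
    have hperf : LPerfect n k T := ⟨hrows, hred, hblue, hcols⟩
    obtain ⟨-, B, hB, hTB⟩ := hTstar
    have hTeqB : T = B := Finset.eq_of_subset_of_card_le hTB (by rw [hB.1, hcard])
    rcases hB.2 with hnp | ⟨S, hSF, -⟩
    · exact absurd (hTeqB ▸ hperf) hnp
    · exact ⟨S, hSF⟩
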